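/- Let s > 0 and let N ∈ ℕ with N ≥ e·s and N ≥ 1. Then the Taylor tail of the exponential satisfies ∑_{k=N+1}^{∞} s^k / k! ≤ √(2/(π N)). Consequently, for any probability measure μ on [0,1] with moments m_k, the truncation error of its characteristic function satisfies |∫₀¹ exp(isx) dμ(x) − ∑_{k=0}^{N} (is)^k m_k / k!| ≤ √(2/(π N)). -/

import Mathlib

open MeasureTheory

namespace CharFunAux
open Real

lemma sqrt_pi_le_stirling (n : ℕ) : Real.sqrt Real.pi ≤ Stirling.stirlingSeq (n + 1) :=
  Stirling.stirlingSeq'_antitone.le_of_tendsto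
    (Stirling.tendsto_stirlingSeq_sqrt_pi.comp (Filter.tendsto_add_atTop_nat 1)) n

lemma factorial_lower (n : ℕ) :
    Real.sqrt Real.pi * (Real.sqrt (2 * (n+1)) * (((n:ℝ)+1) / Real.exp 1) ^ (n+1))
      ≤ ((n+1).factorial : ℝ) := by
  have h := sqrt_pi_le_stirling n
  rw [Stirling.stirlingSeq] at h
  have hpos : 0 < Real.sqrt (2 * (((n:ℕ)+1) : ℕ)) * (((((n:ℕ)+1):ℕ):ℝ) / Real.exp 1) ^ (n+1) := by
    positivity
  rw [le_div_iff₀ hpos] at h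
  push_cast at h ⊢
  linarith

lemma tail_bound (s : ℝ) (hs : 0 < s) (N : ℕ) (hN1 : 1 ≤ N)
    (hNs : Real.exp 1 * s ≤ N) :
    (∑' k : ℕ, s ^ (N + 1 + k) / (Nat.factorial (N + 1 + k) : ℝ)) ≤
      Real.sqrt (2 / (Real.pi * N)) := by
  have he : (0:ℝ) < Real.exp 1 := Real.exp_pos 1
  have hNpos : (0:ℝ) < N := by exact_mod_cast hN1
  -- summability
  have hg : Summable (fun k : ℕ => s ^ k / (Nat.factorial k : ℝ)) :=
    Real.summable_pow_div_factorial s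
  have hf : Summable (fun k : ℕ => s ^ (N + 1 + k) / (Nat.factorial (N + 1 + k) : ℝ)) := by
    have := (summable_nat_add_iff (N+1)).2 hg
    apply this.congr
    intro k
    simp [Nat.add_comm]
  -- geometric bound
  set C : ℝ := s ^ (N + 1) / ((N + 1).factorial : ℝ) with hC
  have hCpos : 0 < C := by positivity
  have hterm : ∀ k : ℕ, s ^ (N + 1 + k) / (Nat.factorial (N + 1 + k) : ℝ)
      ≤ C * ((Real.exp 1)⁻¹) ^ k := by
    intro k
    have hfac : ((N + 1).factorial : ℝ) * ((N:ℝ) + 2) ^ k ≤ ((N + 1 + k).factorial : ℝ) := by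
      have := Nat.factorial_mul_pow_le_factorial (m := N + 1) (n := k)
      exact_mod_cast this
    have hs2 : s ≤ ((N:ℝ) + 2) / Real.exp 1 := by
      rw [le_div_iff₀ he]; linarith
    calc s ^ (N + 1 + k) / (Nat.factorial (N + 1 + k) : ℝ)
        ≤ s ^ (N + 1 + k) / (((N + 1).factorial : ℝ) * ((N:ℝ) + 2) ^ k) := by
          apply div_le_div_of_nonneg_left (by positivity) (by positivity) hfac
      _ = C * (s / ((N:ℝ) + 2)) ^ k := by
          rw [pow_add, div_pow, hC]; field_simp
      _ ≤ C * ((Real.exp 1)⁻¹) ^ k := by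
          apply mul_le_mul_of_nonneg_left _ hCpos.le
          apply pow_le_pow_left₀ (by positivity)
          rw [div_le_iff₀ (by positivity), inv_mul_eq_div, le_div_iff₀ he]
          linarith
  have hgeo : Summable (fun k : ℕ => C * ((Real.exp 1)⁻¹) ^ k) := by
    apply Summable.mul_left
    exact summable_geometric_of_lt_one (by positivity)
      (by rw [inv_lt_one_iff₀]; right; exact Real.one_lt_exp_iff.2 one_pos)
  have h1 : (∑' k : ℕ, s ^ (N + 1 + k) / (Nat.factorial (N + 1 + k) : ℝ))
      ≤ C * (1 - (Real.exp 1)⁻¹)⁻¹ := by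
    calc _ ≤ ∑' k : ℕ, C * ((Real.exp 1)⁻¹) ^ k := hf.tsum_le_tsum hterm hgeo
      _ = C * (1 - (Real.exp 1)⁻¹)⁻¹ := by
          rw [tsum_mul_left, tsum_geometric_of_lt_one (by positivity)
            (by rw [inv_lt_one_iff₀]; right; exact Real.one_lt_exp_iff.2 one_pos)]

  -- bound C itself
  have hD : (0:ℝ) < Real.sqrt Real.pi * Real.sqrt (2 * N) := by
    have : (0:ℝ) < 2 * N := by positivity
    positivity
  set D : ℝ := Real.sqrt Real.pi * Real.sqrt (2 * N) with hDdef
  have hfl : Real.sqrt Real.pi * (Real.sqrt (2 * (N+1)) * (((N:ℝ)+1) / Real.exp 1) ^ (N+1))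
      ≤ ((N + 1).factorial : ℝ) := factorial_lower N
  have hfl2 : D * (((N:ℝ)+1) / Real.exp 1) ^ (N+1) ≤ ((N + 1).factorial : ℝ) := by
    refine le_trans ?_ hfl
    rw [hDdef, mul_assoc]
    apply mul_le_mul_of_nonneg_left _ (Real.sqrt_nonneg _)
    apply mul_le_mul_of_nonneg_right _ (by positivity)
    exact Real.sqrt_le_sqrt (by push_cast; linarith)
  have hratio : ((N:ℝ)/((N:ℝ)+1))^(N+1) ≤ (Real.exp 1)⁻¹ := by
    have h0 : (N:ℝ)/((N:ℝ)+1) ≤ Real.exp (-(1/((N:ℝ)+1))) := by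
      have h := Real.add_one_le_exp (-(1/((N:ℝ)+1)))
      have heq : (N:ℝ)/((N:ℝ)+1) = -(1/((N:ℝ)+1)) + 1 := by field_simp; ring
      linarith [heq ▸ h]
    calc ((N:ℝ)/((N:ℝ)+1))^(N+1) ≤ (Real.exp (-(1/((N:ℝ)+1))))^(N+1) :=
          pow_le_pow_left₀ (by positivity) h0 _
      _ = Real.exp ((N+1 : ℕ) * (-(1/((N:ℝ)+1)))) := by rw [← Real.exp_nat_mul]
      _ = (Real.exp 1)⁻¹ := by
          rw [← Real.exp_neg]; congr 1; push_cast; field_simp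
  have hCle : C ≤ (Real.exp 1)⁻¹ / D := by
    have hsN : s ^ (N+1) ≤ ((N:ℝ)/Real.exp 1) ^ (N+1) := by
      apply pow_le_pow_left₀ hs.le
      rw [le_div_iff₀ he]; linarith
    calc C ≤ ((N:ℝ)/Real.exp 1) ^ (N+1) / ((N + 1).factorial : ℝ) := by
          apply div_le_div_of_nonneg_right hsN (by positivity)
      _ ≤ ((N:ℝ)/Real.exp 1) ^ (N+1) / (D * (((N:ℝ)+1) / Real.exp 1) ^ (N+1)) := by
          apply div_le_div_of_nonneg_left (by positivity) (by positivity) hfl2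
      _ = ((N:ℝ)/((N:ℝ)+1))^(N+1) / D := by
          rw [div_pow, div_pow, div_pow]
          field_simp
      _ ≤ (Real.exp 1)⁻¹ / D := by
          apply div_le_div_of_nonneg_right hratio hD.le
  -- combine
  have hE : (2:ℝ) ≤ Real.exp 1 := by have := Real.add_one_le_exp 1; linarith
  have hinv : (0:ℝ) < 1 - (Real.exp 1)⁻¹ := by
    have : (Real.exp 1)⁻¹ ≤ 2⁻¹ := by
      apply inv_anti₀ (by norm_num) hE
    norm_num at this ⊢; linarith
  have hone : (Real.exp 1)⁻¹ * (1 - (Real.exp 1)⁻¹)⁻¹ ≤ 1 := by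
    have key : (Real.exp 1)⁻¹ * (1 - (Real.exp 1)⁻¹)⁻¹ = (Real.exp 1 - 1)⁻¹ := by
      rw [← mul_inv]
      congr 1
      field_simp
    rw [key]
    have h1 : (1:ℝ) ≤ Real.exp 1 - 1 := by linarith
    have := inv_anti₀ one_pos h1
    simpa using this
  have hsqrt : 1 / D ≤ Real.sqrt (2 / (Real.pi * N)) := by
    have hDsq : D = Real.sqrt (Real.pi * (2 * N)) :=
      (Real.sqrt_mul Real.pi_nonneg _).symm
    rw [hDsq, one_div, ← Real.sqrt_inv]
    apply Real.sqrt_le_sqrt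
    rw [inv_eq_one_div]
    apply div_le_div₀ (by norm_num) (by norm_num) (by positivity)
    nlinarith [Real.pi_pos, hNpos]
  calc (∑' k : ℕ, s ^ (N + 1 + k) / (Nat.factorial (N + 1 + k) : ℝ))
      ≤ C * (1 - (Real.exp 1)⁻¹)⁻¹ := h1
    _ ≤ ((Real.exp 1)⁻¹ / D) * (1 - (Real.exp 1)⁻¹)⁻¹ := by
        apply mul_le_mul_of_nonneg_right hCle (by positivity)
    _ = ((Real.exp 1)⁻¹ * (1 - (Real.exp 1)⁻¹)⁻¹) * (1 / D) := by ring
    _ ≤ 1 * (1 / D) := by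
        apply mul_le_mul_of_nonneg_right hone (by positivity)
    _ = 1 / D := one_mul _
    _ ≤ Real.sqrt (2 / (Real.pi * N)) := hsqrt


lemma char_part (s : ℝ) (hs : 0 < s) (N : ℕ)
    (μ : Measure ℝ) [IsProbabilityMeasure μ] (hsupp : μ (Set.Icc (0:ℝ) 1)ᶜ = 0) :
    ‖(∫ x, Complex.exp (Complex.I * s * (x : ℂ)) ∂μ) -
        ∑ k ∈ Finset.range (N + 1),
          (Complex.I * s) ^ k * ((∫ x, x ^ k ∂μ : ℝ) : ℂ) / (Nat.factorial k : ℂ)‖ ≤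
      (∑' k : ℕ, s ^ (N + 1 + k) / (Nat.factorial (N + 1 + k) : ℝ)) := by
  set T : ℝ := ∑' k : ℕ, s ^ (N + 1 + k) / (Nat.factorial (N + 1 + k) : ℝ) with hT
  have hae : ∀ᵐ x ∂μ, x ∈ Set.Icc (0:ℝ) 1 := by
    rw [MeasureTheory.ae_iff]
    simpa [Set.compl_def] using hsupp
  -- pointwise tail bound
  have hpt : ∀ x : ℝ, x ∈ Set.Icc (0:ℝ) 1 →
      ‖Complex.exp (Complex.I * s * (x:ℂ)) -
        ∑ k ∈ Finset.range (N + 1),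
          (Complex.I * s) ^ k * (x:ℂ) ^ k / (Nat.factorial k : ℂ)‖ ≤ T := by
    intro x hx
    obtain ⟨hx0, hx1⟩ := hx
    set z : ℂ := Complex.I * s * (x:ℂ) with hz
    have hzn : ‖z‖ ≤ s := by
      rw [hz]
      rw [norm_mul, norm_mul, Complex.norm_I, one_mul, Complex.norm_real,
        Complex.norm_real, Real.norm_eq_abs, Real.norm_eq_abs,
        abs_of_pos hs, abs_of_nonneg hx0]
      nlinarith
    have hsumz : Summable (fun k : ℕ => z ^ k / (Nat.factorial k : ℂ)) :=
      NormedSpace.expSeries_div_summable z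
    have hexp : Complex.exp z = ∑' k : ℕ, z ^ k / (Nat.factorial k : ℂ) := by
      rw [Complex.exp_eq_exp_ℂ, NormedSpace.exp_eq_tsum_div]
    have hsplit := Summable.sum_add_tsum_nat_add (N + 1) hsumz
    have heqsum : ∀ k, (Complex.I * s) ^ k * (x:ℂ) ^ k / (Nat.factorial k : ℂ)
        = z ^ k / (Nat.factorial k : ℂ) := by
      intro k; rw [hz]; ring
    have hdiff : Complex.exp z -
        ∑ k ∈ Finset.range (N + 1),
          (Complex.I * s) ^ k * (x:ℂ) ^ k / (Nat.factorial k : ℂ)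
        = ∑' k : ℕ, z ^ (k + (N+1)) / (Nat.factorial (k + (N+1)) : ℂ) := by
      simp_rw [heqsum]
      rw [hexp, sub_eq_iff_eq_add']
      exact hsplit.symm
    rw [hdiff]
    have hnorm : Summable (fun k : ℕ => ‖z ^ (k + (N+1)) / (Nat.factorial (k + (N+1)) : ℂ)‖) := by
      have := Real.summable_pow_div_factorial ‖z‖
      have h2 := (summable_nat_add_iff (N+1)).2 this
      apply h2.congr
      intro k
      simp [norm_div, norm_pow, Complex.norm_natCast]
    refine le_trans (norm_tsum_le_tsum_norm hnorm) ?_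
    have hTs : Summable (fun k : ℕ => s ^ (N + 1 + k) / (Nat.factorial (N + 1 + k) : ℝ)) := by
      have := (summable_nat_add_iff (N+1)).2 (Real.summable_pow_div_factorial s)
      apply this.congr; intro k; simp [Nat.add_comm]
    apply hnorm.tsum_le_tsum _ hTs
    intro k
    rw [norm_div, norm_pow, Complex.norm_natCast]
    rw [show k + (N+1) = N + 1 + k from Nat.add_comm _ _]
    apply div_le_div_of_nonneg_right _ (by positivity)
    exact pow_le_pow_left₀ (norm_nonneg _) hzn _
  -- integrability
  have hint1 : Integrable (fun x : ℝ => Complex.exp (Complex.I * s * (x:ℂ))) μ := by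
    apply Integrable.mono' (integrable_const (1:ℝ))
    · exact (Complex.continuous_exp.comp
        (continuous_const.mul Complex.continuous_ofReal)).aestronglyMeasurable
    · filter_upwards with x
      rw [Complex.norm_exp]
      have : (Complex.I * s * (x:ℂ)).re = 0 := by simp [Complex.mul_re]
      rw [this, Real.exp_zero]
  have hint2 : ∀ k : ℕ, Integrable (fun x : ℝ => x ^ k) μ := by
    intro k
    apply Integrable.mono' (integrable_const (1:ℝ))
    · exact (continuous_pow k).aestronglyMeasurable
    · filter_upwards [hae] with x hx
      obtain ⟨hx0, hx1⟩ := hx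
      rw [Real.norm_eq_abs, abs_of_nonneg (pow_nonneg hx0 k)]
      exact pow_le_one₀ hx0 hx1
  have hintF : ∀ k : ℕ, Integrable
      (fun x : ℝ => (Complex.I * s) ^ k * (x:ℂ) ^ k / (Nat.factorial k : ℂ)) μ := by
    intro k
    have h1 : Integrable (fun x : ℝ => ((x ^ k : ℝ) : ℂ)) μ := (hint2 k).ofReal
    have h2 : Integrable (fun x : ℝ =>
        ((Complex.I * s) ^ k / (Nat.factorial k : ℂ)) * ((x ^ k : ℝ) : ℂ)) μ := h1.const_mul _
    apply h2.congr
    filter_upwards with x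
    push_cast
    ring
  -- compute the integral of each term
  have hterm : ∀ k : ℕ,
      ∫ x, (Complex.I * s) ^ k * (x:ℂ) ^ k / (Nat.factorial k : ℂ) ∂μ
        = (Complex.I * s) ^ k * ((∫ x, x ^ k ∂μ : ℝ) : ℂ) / (Nat.factorial k : ℂ) := by
    intro k
    have : (fun x : ℝ => (Complex.I * s) ^ k * (x:ℂ) ^ k / (Nat.factorial k : ℂ))
        = fun x : ℝ => ((Complex.I * s) ^ k / (Nat.factorial k : ℂ)) * ((x ^ k : ℝ) : ℂ) := by
      funext x; push_cast; ring
    have hcoe : ∫ a : ℝ, ((a ^ k : ℝ) : ℂ) ∂μ = ((∫ x, x ^ k ∂μ : ℝ) : ℂ) :=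
      integral_ofReal
    rw [this, integral_const_mul, hcoe]
    ring
  have hkey : (∫ x, Complex.exp (Complex.I * s * (x:ℂ)) ∂μ) -
      ∑ k ∈ Finset.range (N + 1),
        (Complex.I * s) ^ k * ((∫ x, x ^ k ∂μ : ℝ) : ℂ) / (Nat.factorial k : ℂ)
      = ∫ x, (Complex.exp (Complex.I * s * (x:ℂ)) -
          ∑ k ∈ Finset.range (N + 1),
            (Complex.I * s) ^ k * (x:ℂ) ^ k / (Nat.factorial k : ℂ)) ∂μ := by
    rw [integral_sub hint1 (integrable_finset_sum _ fun k _ => hintF k),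
      integral_finset_sum _ fun k _ => hintF k]
    congr 1
    exact Finset.sum_congr rfl fun k _ => (hterm k).symm
  rw [hkey]
  refine le_trans (norm_integral_le_of_norm_le_const (C := T) ?_) ?_
  · filter_upwards [hae] with x hx
    exact hpt x hx
  · simp [measure_univ]

end CharFunAux

/-- For `s > 0` and `N ≥ e·s`, `N ≥ 1`, the exponential Taylor tail satisfies
`∑_{k>N} sᵏ/k! ≤ √(2/(πN))`; consequently truncating the moment series of the
characteristic function of a probability measure on [0,1] after `N` terms incurs an
error of at most `√(2/(πN))`. -/
theorem charFun_truncation_error (s : ℝ) (hs : 0 < s) (N : ℕ) (hN1 : 1 ≤ N)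
    (hNs : Real.exp 1 * s ≤ N)
    (μ : Measure ℝ) [IsProbabilityMeasure μ] (hsupp : μ (Set.Icc (0:ℝ) 1)ᶜ = 0) :
    (∑' k : ℕ, s ^ (N + 1 + k) / (Nat.factorial (N + 1 + k) : ℝ)) ≤
        Real.sqrt (2 / (Real.pi * N)) ∧
    ‖(∫ x, Complex.exp (Complex.I * s * (x : ℂ)) ∂μ) -
        ∑ k ∈ Finset.range (N + 1),
          (Complex.I * s) ^ k * ((∫ x, x ^ k ∂μ : ℝ) : ℂ) / (Nat.factorial k : ℂ)‖ ≤
      Real.sqrt (2 / (Real.pi * N)) := by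
  have h1 := CharFunAux.tail_bound s hs N hN1 hNs
  exact ⟨h1, le_trans (CharFunAux.char_part s hs N μ hsupp) h1⟩
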